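/- Theorem 2: When data is color-blind, there does not exist an ideal control. That is, no control k_cb (assigning to each X and each (μ_cb, f_cb) ∈ Δ°(X) × (0,1)^X a nonempty compact set of color-blind decision policies d_cb : X → [0,1]) satisfies both: (1) for every game and every discriminatory equilibrium (c̄*, d*_cb), every maximizer d̂_cb of U_F over k_cb(X, μ*_cb,RE, f*_cb,RE) strictly shrinks the interval between the two groups' acceptance rates relative to d*_cb; and (2) for every game, the set of k_cb-controlled equilibria equals the set of non-discriminatory equilibria. -/

import Mathlib

/-!
Formalization of the Coate–Loury statistical discrimination model with
machine-learning (contractible) beliefs, following Zhu,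
"The Impact of Equal Opportunity on Statistical Discrimination".
-/

open scoped BigOperators
open MeasureTheory

noncomputable section

attribute [local instance] Classical.propDecidable

/-- Group identities `I = {w, b}`. -/
inductive GrpI
  | w
  | b
deriving DecidableEq

instance : Fintype GrpI := ⟨{GrpI.w, GrpI.b}, fun x => by cases x <;> simp⟩

/-- Classes `Y = {q, u}` (qualified / unqualified). -/
inductive Cls
  | q
  | u
deriving DecidableEq

instance : Fintype Cls := ⟨{Cls.q, Cls.u}, fun x => by cases x <;> simp⟩

/-- A game `(X, λ_w, p, G, v_q, v_u, ω)` of the Coate–Loury model.  The set of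
other features is the finite product `X = X_1 × ⋯ × X_N`, encoded as the pi type
`(j : Fin N) → Xs j`.  The statistical model (Assumption 1) is encoded through a
nonempty subset `Ysub ⊆ {1, …, N}` together with the factorization
`p(x | i, y) = pY(x_𝒴 | y) · pC(x_{-𝒴} | i, x_𝒴)`.  The cost distribution is
given by an everywhere positive density `g` with `∫ g = 1` and `∫ |c| g(c) dc < ∞`. -/
structure Game (N : ℕ) (Xs : Fin N → Type) [∀ j, Fintype (Xs j)]
    [∀ j, Nonempty (Xs j)] where
  lamw : ℝ
  lamw_pos : 0 < lamw
  lamw_lt_one : lamw < 1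
  Ysub : Finset (Fin N)
  Ysub_nonempty : Ysub.Nonempty
  pY : ((j : Ysub) → Xs j.1) → Cls → ℝ
  pC : GrpI → ((j : Fin N) → Xs j) → ℝ
  pY_pos : ∀ xY y, 0 < pY xY y
  pC_pos : ∀ i x, 0 < pC i x
  pY_sum : ∀ y, ∑ xY, pY xY y = 1
  pC_sum : ∀ (i : GrpI) (xY : (j : Ysub) → Xs j.1),
    ∑ x ∈ Finset.univ.filter
        (fun x : (j : Fin N) → Xs j => (fun j : Ysub => x j.1) = xY),
      pC i x = 1
  g : ℝ → ℝ
  g_pos : ∀ c, 0 < g c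
  g_int : Integrable g
  g_norm : (∫ c, g c) = 1
  g_abs_int : Integrable fun c => |c| * g c
  vq : ℝ
  vu : ℝ
  om : ℝ
  vq_pos : 0 < vq
  vu_pos : 0 < vu
  om_pos : 0 < om

section Policies

variable {N : ℕ} {Xs : Fin N → Type}

/-- A decision policy `d : I × X → [0,1]`. -/
def IsPolicy (d : GrpI → ((j : Fin N) → Xs j) → ℝ) : Prop :=
  ∀ i x, d i x ∈ Set.Icc (0 : ℝ) 1

/-- A decision policy when data is color-blind, `d_cb : X → [0,1]`. -/
def IsCbPolicy (dcb : ((j : Fin N) → Xs j) → ℝ) : Prop :=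
  ∀ x, dcb x ∈ Set.Icc (0 : ℝ) 1

/-- `S ⊆ {1, …, N}` has the dependence property for the belief `f`:
`f` depends on `(i, x)` only up to `(i, x_S)`. -/
def DepProp {I : Type} (f : I → ((j : Fin N) → Xs j) → ℝ)
    (S : Finset (Fin N)) : Prop :=
  ∀ (i : I) (x x' : (j : Fin N) → Xs j), (∀ j ∈ S, x j = x' j) → f i x = f i x'

/-- The minimal subset `Ŷ(f)` with the dependence property. -/
def minDep {I : Type} (f : I → ((j : Fin N) → Xs j) → ℝ) : Finset (Fin N) :=
  Finset.univ.filter fun j => ∀ S : Finset (Fin N), DepProp f S → j ∈ S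

variable [∀ j, Fintype (Xs j)]

/-- Full-support probability distributions on `I × X` (the set `Δ°(I × X)`). -/
def FullSupp (μ : GrpI → ((j : Fin N) → Xs j) → ℝ) : Prop :=
  (∀ i x, 0 < μ i x) ∧ ∑ i, ∑ x, μ i x = 1

/-- Beliefs valued in `(0, 1)`. -/
def OpenBelief (f : GrpI → ((j : Fin N) → Xs j) → ℝ) : Prop :=
  ∀ i x, f i x ∈ Set.Ioo (0 : ℝ) 1

/-- Acceptance rate of group `i`. -/
def AR (i : GrpI) (d μ : GrpI → ((j : Fin N) → Xs j) → ℝ) : ℝ :=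
  (∑ x, d i x * μ i x) / ∑ x, μ i x

/-- True positive rate of group `i`. -/
def TP (i : GrpI) (d μ f : GrpI → ((j : Fin N) → Xs j) → ℝ) : ℝ :=
  (∑ x, d i x * μ i x * f i x) / ∑ x, μ i x * f i x

/-- The equal opportunity control `k(X, μ, f)`. -/
def EOset (μ f : GrpI → ((j : Fin N) → Xs j) → ℝ) :
    Set (GrpI → ((j : Fin N) → Xs j) → ℝ) :=
  {d | IsPolicy d ∧ TP GrpI.w d μ f = TP GrpI.b d μ f}

/-- The color-blind control: all color-blind decision policies. -/
def CBset : Set (GrpI → ((j : Fin N) → Xs j) → ℝ) :=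
  {d | IsPolicy d ∧ ∀ x, d GrpI.w x = d GrpI.b x}

/-- The no proxies control: policies depending on `(i,x)` only through `x_{Ŷ(f)}`. -/
def NoProxies (_μ f : GrpI → ((j : Fin N) → Xs j) → ℝ) :
    Set (GrpI → ((j : Fin N) → Xs j) → ℝ) :=
  {d | IsPolicy d ∧
    ∀ i i' x x', (∀ j ∈ minDep f, x j = x' j) → d i x = d i' x'}

/-- `ℓ²` distance between decision policies. -/
def polDist (d d' : GrpI → ((j : Fin N) → Xs j) → ℝ) : ℝ :=
  Real.sqrt (∑ i, ∑ x, (d i x - d' i x) ^ 2)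

/-- `ℓ²` distance between pairs `(μ, f)`. -/
def pairDist (μ f μ' f' : GrpI → ((j : Fin N) → Xs j) → ℝ) : ℝ :=
  Real.sqrt ((∑ i, ∑ x, (μ i x - μ' i x) ^ 2) + ∑ i, ∑ x, (f i x - f' i x) ^ 2)

/-- `ℓ²` distance between strategy profiles `(c̄, d)`. -/
def profDist (c : GrpI → ℝ) (d : GrpI → ((j : Fin N) → Xs j) → ℝ)
    (c' : GrpI → ℝ) (d' : GrpI → ((j : Fin N) → Xs j) → ℝ) : ℝ :=
  Real.sqrt ((∑ i, (c i - c' i) ^ 2) + ∑ i, ∑ x, (d i x - d' i x) ^ 2)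

end Policies

/-- Upper hemicontinuity of a correspondence on a set. -/
def UpperHemicontinuousOn' {α β : Type*} [TopologicalSpace α] [TopologicalSpace β]
    (F : α → Set β) (S : Set α) : Prop :=
  ∀ a ∈ S, ∀ V : Set β, IsOpen V → F a ⊆ V → ∀ᶠ a' in nhdsWithin a S, F a' ⊆ V

/-- Lower hemicontinuity of a correspondence on a set. -/
def LowerHemicontinuousOn' {α β : Type*} [TopologicalSpace α] [TopologicalSpace β]
    (F : α → Set β) (S : Set α) : Prop :=
  ∀ a ∈ S, ∀ V : Set β, IsOpen V → (F a ∩ V).Nonempty →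
    ∀ᶠ a' in nhdsWithin a S, (F a' ∩ V).Nonempty

namespace Game

variable {N : ℕ} {Xs : Fin N → Type} [∀ j, Fintype (Xs j)] [∀ j, Nonempty (Xs j)]
variable (Γ : Game N Xs)

/-- Projection `x ↦ x_𝒴`. -/
def proj (x : (j : Fin N) → Xs j) : (j : Γ.Ysub) → Xs j.1 := fun j => x j.1

/-- `p(x | i, y) = p(x_𝒴 | y) · p(x_{-𝒴} | i, x_𝒴)`. -/
def p (i : GrpI) (x : (j : Fin N) → Xs j) (y : Cls) : ℝ :=
  Γ.pY (Γ.proj x) y * Γ.pC i x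

/-- Group probabilities `λ_w`, `λ_b = 1 - λ_w`. -/
def lam : GrpI → ℝ := fun i =>
  match i with
  | GrpI.w => Γ.lamw
  | GrpI.b => 1 - Γ.lamw

/-- The CDF `G` of the cost distribution. -/
def G (c : ℝ) : ℝ := ∫ t in Set.Iic c, Γ.g t

/-- The likelihood function `l(x) = p(x_𝒴 | q) / p(x_𝒴 | u)`. -/
def lhd (x : (j : Fin N) → Xs j) : ℝ :=
  Γ.pY (Γ.proj x) Cls.q / Γ.pY (Γ.proj x) Cls.u

/-- The likelihood function on `X_𝒴`. -/
def lhdY (xY : (j : Γ.Ysub) → Xs j.1) : ℝ := Γ.pY xY Cls.q / Γ.pY xY Cls.u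

/-- The set of likelihood values `{l_1 < … < l_n}`. -/
def LVset : Set ℝ := Set.range Γ.lhd

/-- The assumption that `1` is not a likelihood value
(equivalently, `WW` is single-peaked). -/
def OneNotLV : Prop := (1 : ℝ) ∉ Γ.LVset

/-- The largest likelihood value `l_n`. -/
def lmax : ℝ := sSup Γ.LVset

/-- `⌈ℓ⌉`: the smallest likelihood value `≥ ℓ`. -/
def lceil (ℓ : ℝ) : ℝ := sInf {v | v ∈ Γ.LVset ∧ ℓ ≤ v}

/-- `⌈ℓ⌉⁻`: the next smallest likelihood value below `⌈ℓ⌉` (or `l_0 = 0`). -/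
def lceilm (ℓ : ℝ) : ℝ := sSup (insert 0 {v | v ∈ Γ.LVset ∧ v < Γ.lceil ℓ})

/-- The smallest likelihood value `> ℓ`. -/
def lnext (ℓ : ℝ) : ℝ := sInf {v | v ∈ Γ.LVset ∧ ℓ < v}

/-- The true distribution of features `μ_RE` given cost thresholds `c̄`. -/
def muRE (c : GrpI → ℝ) (i : GrpI) (x : (j : Fin N) → Xs j) : ℝ :=
  Γ.lam i * (Γ.G (c i) * Γ.p i x Cls.q + (1 - Γ.G (c i)) * Γ.p i x Cls.u)

/-- The true conditional probability (calibrated belief) `f_RE` given `c̄`. -/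
def fRE (c : GrpI → ℝ) (i : GrpI) (x : (j : Fin N) → Xs j) : ℝ :=
  Γ.G (c i) * Γ.p i x Cls.q /
    (Γ.G (c i) * Γ.p i x Cls.q + (1 - Γ.G (c i)) * Γ.p i x Cls.u)

/-- Utility `U_i(c̄(i), d(i))` of the representative `i`-applicant. -/
def Uapp (i : GrpI) (ci : ℝ) (di : ((j : Fin N) → Xs j) → ℝ) : ℝ :=
  Γ.om * ∑ x, (Γ.G ci * Γ.p i x Cls.q + (1 - Γ.G ci) * Γ.p i x Cls.u) * di x -
    ∫ t in Set.Iic ci, t * Γ.g t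

/-- Firm utility `U_F(d, μ, f)`. -/
def UF (d μ f : GrpI → ((j : Fin N) → Xs j) → ℝ) : ℝ :=
  ∑ i, ∑ x, d i x * μ i x * (f i x * Γ.vq - (1 - f i x) * Γ.vu)

/-- The color-blind true distribution of features `μ_cb,RE`. -/
def mucbRE (c : GrpI → ℝ) (x : (j : Fin N) → Xs j) : ℝ :=
  Γ.muRE c GrpI.w x + Γ.muRE c GrpI.b x

/-- The color-blind true conditional probability `f_cb,RE`. -/
def fcbRE (c : GrpI → ℝ) (x : (j : Fin N) → Xs j) : ℝ :=
  (Γ.muRE c GrpI.w x * Γ.fRE c GrpI.w x + Γ.muRE c GrpI.b x * Γ.fRE c GrpI.b x) /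
    Γ.mucbRE c x

/-- Firm utility when data is color-blind. -/
def UFcb (dcb μcb fcb : ((j : Fin N) → Xs j) → ℝ) : ℝ :=
  ∑ x, dcb x * μcb x * (fcb x * Γ.vq - (1 - fcb x) * Γ.vu)

/-- `d(i | l_m)`: conditional acceptance probability at likelihood value `lv`. -/
def dcond (i : GrpI) (di : ((j : Fin N) → Xs j) → ℝ) (lv : ℝ) : ℝ :=
  (∑ x ∈ Finset.univ.filter (fun x => Γ.lhd x = lv), Γ.p i x Cls.q * di x) /
    ∑ x ∈ Finset.univ.filter (fun x => Γ.lhd x = lv), Γ.p i x Cls.q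

/-- The within-group policy `d(i)` is associated with the likelihood mixture `ℓ`. -/
def AssociatedWith (i : GrpI) (di : ((j : Fin N) → Xs j) → ℝ) (ℓ : ℝ) : Prop :=
  0 ≤ ℓ ∧ ℓ ≤ Γ.lmax ∧
    ∀ lv ∈ Γ.LVset,
      (Γ.lceil ℓ < lv → Γ.dcond i di lv = 1) ∧
      (lv = Γ.lceil ℓ →
        Γ.dcond i di lv = (Γ.lceil ℓ - ℓ) / (Γ.lceil ℓ - Γ.lceilm ℓ)) ∧
      (lv < Γ.lceil ℓ → Γ.dcond i di lv = 0)

/-- A decision policy is fair if both within-group policies are associated with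
the same likelihood mixture. -/
def Fair (d : GrpI → ((j : Fin N) → Xs j) → ℝ) : Prop :=
  ∃ ℓ, Γ.AssociatedWith GrpI.w (d GrpI.w) ℓ ∧ Γ.AssociatedWith GrpI.b (d GrpI.b) ℓ

/-- `WW(l_m) = ω ∑_{x_𝒴 : l(x_𝒴) > l_m} (p(x_𝒴|q) - p(x_𝒴|u))`. -/
def WWval (t : ℝ) : ℝ :=
  Γ.om * ∑ xY ∈ Finset.univ.filter (fun xY => t < Γ.lhdY xY),
    (Γ.pY xY Cls.q - Γ.pY xY Cls.u)

/-- The piecewise-linear function `WW` interpolating the points `(l_m, WW(l_m))`. -/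
def WW (ℓ : ℝ) : ℝ :=
  if Γ.lceil ℓ = Γ.lceilm ℓ then Γ.WWval (Γ.lceil ℓ)
  else
    (Γ.WWval (Γ.lceilm ℓ) * (Γ.lceil ℓ - ℓ) +
        Γ.WWval (Γ.lceil ℓ) * (ℓ - Γ.lceilm ℓ)) /
      (Γ.lceil ℓ - Γ.lceilm ℓ)

/-- `EĒ(l_m)`: the unique cost with `G(EĒ(l_m)) = 1 / ((v_q/v_u) l_m + 1)`. -/
def EEbar (lv : ℝ) : ℝ := sInf {cc | 1 / (Γ.vq / Γ.vu * lv + 1) ≤ Γ.G cc}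

/-- The correspondence `EE : [0, l_n] ⇒ ℝ`. -/
def EE (ℓ : ℝ) : Set ℝ :=
  if ℓ = 0 then Set.Ici (Γ.EEbar (Γ.lceil 0))
  else if ℓ = Γ.lmax then Set.Iic (Γ.EEbar Γ.lmax)
  else if ℓ ∈ Γ.LVset then Set.Icc (Γ.EEbar (Γ.lnext ℓ)) (Γ.EEbar ℓ)
  else {Γ.EEbar (Γ.lceil ℓ)}

/-- Each representative applicant's cost threshold is a best response to `d`. -/
def BestResponds (c : GrpI → ℝ) (d : GrpI → ((j : Fin N) → Xs j) → ℝ) : Prop :=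
  ∀ (i : GrpI) (c' : ℝ), Γ.Uapp i c' (d i) ≤ Γ.Uapp i (c i) (d i)

/-- An (un-controlled) equilibrium. -/
def IsEquilibrium (c : GrpI → ℝ) (d : GrpI → ((j : Fin N) → Xs j) → ℝ) : Prop :=
  IsPolicy d ∧ Γ.BestResponds c d ∧
    ∀ d', IsPolicy d' →
      Γ.UF d' (Γ.muRE c) (Γ.fRE c) ≤ Γ.UF d (Γ.muRE c) (Γ.fRE c)

/-- A `k`-controlled equilibrium, for the control `(μ, f) ↦ K μ f`. -/
def IsControlledEq
    (K : (GrpI → ((j : Fin N) → Xs j) → ℝ) → (GrpI → ((j : Fin N) → Xs j) → ℝ) →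
      Set (GrpI → ((j : Fin N) → Xs j) → ℝ))
    (c : GrpI → ℝ) (d : GrpI → ((j : Fin N) → Xs j) → ℝ) : Prop :=
  d ∈ K (Γ.muRE c) (Γ.fRE c) ∧ Γ.BestResponds c d ∧
    ∀ d' ∈ K (Γ.muRE c) (Γ.fRE c),
      Γ.UF d' (Γ.muRE c) (Γ.fRE c) ≤ Γ.UF d (Γ.muRE c) (Γ.fRE c)

/-- `𝒮_k(μ, f)`: firm-optimal policies under the control `K` at `(μ, f)`. -/
def Smax
    (K : (GrpI → ((j : Fin N) → Xs j) → ℝ) → (GrpI → ((j : Fin N) → Xs j) → ℝ) →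
      Set (GrpI → ((j : Fin N) → Xs j) → ℝ))
    (μ f : GrpI → ((j : Fin N) → Xs j) → ℝ) :
    Set (GrpI → ((j : Fin N) → Xs j) → ℝ) :=
  {d | d ∈ K μ f ∧ ∀ d' ∈ K μ f, Γ.UF d' μ f ≤ Γ.UF d μ f}

/-- A `k`-controlled `ε`-equilibrium. -/
def IsCtrlEpsEq
    (K : (GrpI → ((j : Fin N) → Xs j) → ℝ) → (GrpI → ((j : Fin N) → Xs j) → ℝ) →
      Set (GrpI → ((j : Fin N) → Xs j) → ℝ))
    (ε : ℝ) (c : GrpI → ℝ) (d : GrpI → ((j : Fin N) → Xs j) → ℝ) : Prop :=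
  ∃ μ f, FullSupp μ ∧ OpenBelief f ∧
    pairDist μ f (Γ.muRE c) (Γ.fRE c) ≤ ε ∧
    Γ.BestResponds c d ∧ d ∈ K μ f ∧ ∀ d' ∈ K μ f, Γ.UF d' μ f ≤ Γ.UF d μ f

/-- Best responses of applicants to a color-blind policy. -/
def BestRespondsCb (c : GrpI → ℝ) (dcb : ((j : Fin N) → Xs j) → ℝ) : Prop :=
  ∀ (i : GrpI) (c' : ℝ), Γ.Uapp i c' dcb ≤ Γ.Uapp i (c i) dcb

/-- An equilibrium when data is color-blind (unrestricted control). -/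
def IsCbEquilibrium (c : GrpI → ℝ) (dcb : ((j : Fin N) → Xs j) → ℝ) : Prop :=
  IsCbPolicy dcb ∧ Γ.BestRespondsCb c dcb ∧
    ∀ dcb', IsCbPolicy dcb' →
      Γ.UFcb dcb' (Γ.mucbRE c) (Γ.fcbRE c) ≤ Γ.UFcb dcb (Γ.mucbRE c) (Γ.fcbRE c)

/-- A `k_cb`-controlled equilibrium when data is color-blind. -/
def IsCbControlledEq (K : Set (((j : Fin N) → Xs j) → ℝ)) (c : GrpI → ℝ)
    (dcb : ((j : Fin N) → Xs j) → ℝ) : Prop :=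
  dcb ∈ K ∧ Γ.BestRespondsCb c dcb ∧
    ∀ dcb' ∈ K,
      Γ.UFcb dcb' (Γ.mucbRE c) (Γ.fcbRE c) ≤ Γ.UFcb dcb (Γ.mucbRE c) (Γ.fcbRE c)

end Game

/-- A control when data is color-blind: for each `X` and each
`(μ_cb, f_cb) ∈ Δ°(X) × (0,1)^X` it specifies a nonempty compact set of
color-blind decision policies. -/
structure CbControl : Type 1 where
  sets : ∀ (N : ℕ) (Xs : Fin N → Type) [∀ j, Fintype (Xs j)] [∀ j, Nonempty (Xs j)],
    (((j : Fin N) → Xs j) → ℝ) → (((j : Fin N) → Xs j) → ℝ) →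
      Set (((j : Fin N) → Xs j) → ℝ)
  nonempty : ∀ (N : ℕ) (Xs : Fin N → Type) [∀ j, Fintype (Xs j)]
    [∀ j, Nonempty (Xs j)] (μ f : ((j : Fin N) → Xs j) → ℝ),
    (∀ x, 0 < μ x) → (∑ x, μ x = 1) → (∀ x, f x ∈ Set.Ioo (0 : ℝ) 1) →
    (sets N Xs μ f).Nonempty
  compact : ∀ (N : ℕ) (Xs : Fin N → Type) [∀ j, Fintype (Xs j)]
    [∀ j, Nonempty (Xs j)] (μ f : ((j : Fin N) → Xs j) → ℝ),
    (∀ x, 0 < μ x) → (∑ x, μ x = 1) → (∀ x, f x ∈ Set.Ioo (0 : ℝ) 1) →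
    IsCompact (sets N Xs μ f)
  mem_policy : ∀ (N : ℕ) (Xs : Fin N → Type) [∀ j, Fintype (Xs j)]
    [∀ j, Nonempty (Xs j)] (μ f : ((j : Fin N) → Xs j) → ℝ),
    (∀ x, 0 < μ x) → (∑ x, μ x = 1) → (∀ x, f x ∈ Set.Ioo (0 : ℝ) 1) →
    sets N Xs μ f ⊆ {dcb | IsCbPolicy dcb}


namespace NoIdeal
open Real MeasureTheory Set


/-- Laplace density centered at `m`. -/
def lap (m t : ℝ) : ℝ := Real.exp (-|t - m|) / 2

/-- CDF of the Laplace density. -/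
def lapCDF (m c : ℝ) : ℝ := ∫ t in Set.Iic c, lap m t

lemma lap_pos (m t : ℝ) : 0 < lap m t := by
  unfold lap; positivity

lemma lap_nonneg (m t : ℝ) : 0 ≤ lap m t := (lap_pos m t).le

lemma lap_continuous (m : ℝ) : Continuous (lap m) := by
  unfold lap
  fun_prop

/-- from mathlib's integral_comp_abs proof idea -/
lemma integrable_comp_abs {f : ℝ → ℝ} (hf : IntegrableOn (fun x => f |x|) (Ioi 0)) :
    Integrable (fun x => f |x|) := by
  have int_Iic : IntegrableOn (fun x ↦ f |x|) (Iic 0) := by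
    rw [← Measure.map_neg_eq_self (volume : Measure ℝ)]
    let m : MeasurableEmbedding fun x : ℝ => -x := (Homeomorph.neg ℝ).measurableEmbedding
    rw [m.integrableOn_map_iff]
    simp_rw [Function.comp_def, abs_neg, neg_preimage, neg_Iic, neg_zero]
    exact Iff.mpr integrableOn_Ici_iff_integrableOn_Ioi hf
  have := int_Iic.union hf
  rwa [Iic_union_Ioi, integrableOn_univ] at this

lemma integrable_exp_neg_abs : Integrable (fun x : ℝ => Real.exp (-|x|)) := by
  apply integrable_comp_abs (f := fun u => Real.exp (-u))
  have h := exp_neg_integrableOn_Ioi (0:ℝ) one_pos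
  refine h.congr_fun (fun x hx => ?_) measurableSet_Ioi
  beta_reduce
  rw [abs_of_pos (mem_Ioi.mp hx), neg_one_mul]

lemma integrable_abs_mul_exp_neg_abs :
    Integrable (fun x : ℝ => |x| * Real.exp (-|x|)) := by
  have hG : IntegrableOn (fun x : ℝ => Real.exp (-x) * x ^ ((2:ℝ) - 1)) (Ioi 0) :=
    Real.GammaIntegral_convergent (by norm_num)
  have : IntegrableOn (fun x : ℝ => |x| * Real.exp (-|x|)) (Ioi 0) := by
    refine hG.congr_fun (fun x hx => ?_) measurableSet_Ioi
    have hx0 : (0:ℝ) < x := mem_Ioi.mp hx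
    beta_reduce
    rw [show ((2:ℝ) - 1) = 1 by norm_num, Real.rpow_one, abs_of_pos hx0, mul_comm]
  exact integrable_comp_abs (f := fun u => u * Real.exp (-u)) this

lemma integrable_lap (m : ℝ) : Integrable (lap m) := by
  have : Integrable (fun t : ℝ => Real.exp (-|t - m|)) :=
    integrable_exp_neg_abs.comp_sub_right m
  exact (this.mul_const (2:ℝ)⁻¹).congr (Filter.Eventually.of_forall fun t => by simp [lap, div_eq_mul_inv])

lemma integrable_abs_lap (m : ℝ) : Integrable (fun t => |t| * lap m t) := by
  have hb : Integrable (fun u : ℝ => (|u| + |m|) * Real.exp (-|u|) / 2) := by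
    have h := (integrable_abs_mul_exp_neg_abs.add (integrable_exp_neg_abs.const_mul |m|)).div_const 2
    refine h.congr (Filter.Eventually.of_forall fun x => ?_)
    simp only [Pi.add_apply]; ring
  have h1 : Integrable (fun t : ℝ => (|t - m| + |m|) * Real.exp (-|t - m|) / 2) :=
    hb.comp_sub_right m
  refine h1.mono' ((continuous_abs.mul (lap_continuous m)).aestronglyMeasurable)
    (Filter.Eventually.of_forall fun t => ?_)
  have h2 : |t| ≤ |t - m| + |m| := by
    calc |t| = |t - m + m| := by ring_nf
    _ ≤ |t - m| + |m| := abs_add_le _ _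
  rw [Real.norm_eq_abs, abs_mul, abs_abs, abs_of_nonneg (lap_nonneg m t), lap]
  have h3 := Real.exp_nonneg (-|t - m|)
  have := mul_le_mul_of_nonneg_right h2 h3
  linarith

lemma integrable_id_lap (m : ℝ) : Integrable (fun t => t * lap m t) := by
  refine (integrable_abs_lap m).mono'
    ((continuous_id.mul (lap_continuous m)).aestronglyMeasurable)
    (Filter.Eventually.of_forall fun t => ?_)
  rw [Real.norm_eq_abs, abs_mul, abs_of_nonneg (lap_nonneg m t)]

lemma lapCDF_of_le {m c : ℝ} (h : c ≤ m) : lapCDF m c = Real.exp (c - m) / 2 := by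
  unfold lapCDF
  have : ∀ t ∈ Iic c, lap m t = Real.exp t * (Real.exp (-m) / 2) := by
    intro t ht
    have ht' : t ≤ m := le_trans (mem_Iic.mp ht) h
    rw [lap, abs_of_nonpos (by linarith), neg_neg, Real.exp_sub, Real.exp_neg]
    ring
  rw [setIntegral_congr_fun measurableSet_Iic this, integral_mul_const, integral_exp_Iic,
    Real.exp_sub, Real.exp_neg]
  ring

lemma lapCDF_self (m : ℝ) : lapCDF m m = 1 / 2 := by
  rw [lapCDF_of_le le_rfl, sub_self, Real.exp_zero]

lemma lapCDF_of_ge {m c : ℝ} (h : m ≤ c) : lapCDF m c = 1 - Real.exp (-(c - m)) / 2 := by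
  have hsub : lapCDF m c - lapCDF m m = ∫ t in m..c, lap m t :=
    intervalIntegral.integral_Iic_sub_Iic ((integrable_lap m).integrableOn) ((integrable_lap m).integrableOn)
  have hint : (∫ t in m..c, lap m t) = 1 / 2 - Real.exp (-(c - m)) / 2 := by
    have hcong : ∀ t ∈ Set.uIcc m c, lap m t = Real.exp (m - t) / 2 := by
      intro t ht
      rw [Set.uIcc_of_le h] at ht
      rw [lap, abs_of_nonneg (by linarith [ht.1])]
      ring_nf
    rw [intervalIntegral.integral_congr hcong]
    have hderiv : ∀ t ∈ Set.uIcc m c, HasDerivAt (fun u => -Real.exp (m - u) / 2)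
        (Real.exp (m - t) / 2) t := by
      intro t _
      have h1 : HasDerivAt (fun u : ℝ => m - u) (-1) t := by
        simpa using (hasDerivAt_id t).const_sub m
      have h2 := (Real.hasDerivAt_exp (m - t)).comp t h1
      have h3 := (h2.const_mul (-(1:ℝ)/2))
      have e : (fun u => -Real.exp (m - u) / 2) = fun y => -(1:ℝ)/2 * (Real.exp ∘ HSub.hSub m) y := by
        funext u; simp only [Function.comp_apply]; ring
      rw [e]; exact h3.congr_deriv (by ring)
    have hii : IntervalIntegrable (fun t => Real.exp (m - t) / 2) volume m c := by
      apply Continuous.intervalIntegrable; fun_prop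
    rw [intervalIntegral.integral_eq_sub_of_hasDerivAt hderiv hii]
    rw [sub_self, Real.exp_zero]
    ring_nf
  rw [hint, lapCDF_self] at hsub
  linarith

lemma lapCDF_total (m : ℝ) : (∫ t, lap m t) = 1 := by
  rw [← intervalIntegral.integral_Iic_add_Ioi (b := m) ((integrable_lap m).integrableOn)
    ((integrable_lap m).integrableOn)]
  have h1 : (∫ t in Iic m, lap m t) = 1 / 2 := lapCDF_self m
  have h2 : (∫ t in Ioi m, lap m t) = 1 / 2 := by
    have hcong : ∀ t ∈ Ioi m, lap m t = Real.exp m / 2 * Real.exp (-t) := by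
      intro t ht
      rw [lap, abs_of_nonneg (by linarith [mem_Ioi.mp ht]), neg_sub, Real.exp_sub,
        Real.exp_neg]
      ring
    rw [setIntegral_congr_fun measurableSet_Ioi hcong, integral_const_mul, integral_exp_neg_Ioi,
      Real.exp_neg]
    field_simp
  rw [h1, h2]; norm_num

lemma lapCDF_lt_one (m c : ℝ) : lapCDF m c < 1 := by
  rcases le_total c m with h | h
  · rw [lapCDF_of_le h]
    have := Real.exp_pos (c - m)
    have hle : Real.exp (c - m) ≤ 1 := Real.exp_le_one_iff.mpr (by linarith)
    linarith
  · rw [lapCDF_of_ge h]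
    have := Real.exp_pos (-(c - m))
    linarith

lemma lapCDF_pos (m c : ℝ) : 0 < lapCDF m c := by
  rcases le_total c m with h | h
  · rw [lapCDF_of_le h]; positivity
  · rw [lapCDF_of_ge h]
    have hle : Real.exp (-(c - m)) ≤ 1 := Real.exp_le_one_iff.mpr (by linarith)
    linarith

/-- The key best-response property: `c ↦ K * CDF c - ∫_{≤c} t g(t)` is maximized at `c = K`. -/
lemma lap_br (m K c' : ℝ) :
    K * lapCDF m c' - (∫ t in Iic c', t * lap m t) ≤
      K * lapCDF m K - (∫ t in Iic K, t * lap m t) := by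
  have hlapOn : ∀ a : ℝ, IntegrableOn (lap m) (Iic a) := fun a => (integrable_lap m).integrableOn
  have htOn : ∀ a : ℝ, IntegrableOn (fun t => t * lap m t) (Iic a) :=
    fun a => (integrable_id_lap m).integrableOn
  have hd1 : lapCDF m K - lapCDF m c' = ∫ t in c'..K, lap m t :=
    intervalIntegral.integral_Iic_sub_Iic (hlapOn c') (hlapOn K)
  have hd2 : (∫ t in Iic K, t * lap m t) - (∫ t in Iic c', t * lap m t)
      = ∫ t in c'..K, t * lap m t := intervalIntegral.integral_Iic_sub_Iic (htOn c') (htOn K)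
  have hii1 : IntervalIntegrable (lap m) volume c' K := (integrable_lap m).intervalIntegrable
  have hii2 : IntervalIntegrable (fun t => t * lap m t) volume c' K :=
    (integrable_id_lap m).intervalIntegrable
  have key : (K * lapCDF m K - (∫ t in Iic K, t * lap m t)) -
      (K * lapCDF m c' - (∫ t in Iic c', t * lap m t))
      = ∫ t in c'..K, (K - t) * lap m t := by
    have : (∫ t in c'..K, (K - t) * lap m t)
        = K * (∫ t in c'..K, lap m t) - ∫ t in c'..K, t * lap m t := by
      rw [← intervalIntegral.integral_const_mul, ← intervalIntegral.integral_sub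
        (hii1.const_mul K) hii2]
      congr 1; funext t; ring
    rw [this, ← hd1, ← hd2]; ring
  have hnn : 0 ≤ ∫ t in c'..K, (K - t) * lap m t := by
    rcases le_total c' K with h | h
    · rw [intervalIntegral.integral_of_le h]
      apply setIntegral_nonneg measurableSet_Ioc
      intro t ht
      have : t ≤ K := (mem_Ioc.mp ht).2
      have := lap_nonneg m t
      nlinarith
    · rw [intervalIntegral.integral_of_ge h, neg_nonneg]
      apply setIntegral_nonpos measurableSet_Ioc
      intro t ht
      have h1 : K ≤ t := le_of_lt (mem_Ioc.mp ht).1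
      have h2 := lap_nonneg m t
      nlinarith
  linarith



abbrev XT : Fin 2 → Type := fun _ => Bool
abbrev X2 := (j : Fin 2) → Bool

/-- explicit element of `X2`. -/
def F2 (a b : Bool) : X2 := (piFinTwoEquiv fun _ => Bool).symm (a, b)

@[simp] lemma F2_zero (a b : Bool) : F2 a b 0 = a := rfl
@[simp] lemma F2_one (a b : Bool) : F2 a b 1 = b := rfl

lemma sum_X2 (F : X2 → ℝ) : ∑ x, F x =
    F (F2 true true) + F (F2 true false) + F (F2 false true) + F (F2 false false) := by
  rw [← Equiv.sum_comp (piFinTwoEquiv fun _ => Bool).symm F, Fintype.sum_prod_type]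
  simp only [Fintype.sum_bool]
  show F (F2 true true) + F (F2 true false) + (F (F2 false true) + F (F2 false false)) = _
  ring

lemma mem0 : (0 : Fin 2) ∈ ({0} : Finset (Fin 2)) := by decide

def eY : ((j : ({0} : Finset (Fin 2))) → Bool) ≃ Bool where
  toFun f := f ⟨0, mem0⟩
  invFun b := fun _ => b
  left_inv f := by
    funext j
    obtain ⟨j, hj⟩ := j
    have hj0 : j = 0 := by simpa using hj
    subst hj0; rfl
  right_inv b := rfl

def eU : ((j : (Finset.univ : Finset (Fin 2))) → Bool) ≃ X2 where
  toFun f j := f ⟨j, Finset.mem_univ j⟩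
  invFun x j := x j.1
  left_inv f := rfl
  right_inv x := rfl

lemma projY_eq (a b : Bool) (xY : (j : ({0} : Finset (Fin 2))) → Bool) :
    ((fun j : ({0} : Finset (Fin 2)) => F2 a b j.1) = xY) ↔ xY ⟨0, mem0⟩ = a := by
  constructor
  · intro h; rw [← h]; rfl
  · intro h; funext j
    obtain ⟨j, hj⟩ := j
    have hj0 : j = 0 := by simpa using hj
    subst hj0
    simpa using h.symm

def pqf : Bool → ℝ := fun b => if b then 2/3 else 1/3
def puf : Bool → ℝ := fun b => if b then 1/3 else 2/3
def qC : GrpI → Bool → ℝ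
  | GrpI.w, _ => 1/2
  | GrpI.b, b => if b then 1/4 else 3/4
def cst : GrpI → ℝ
  | GrpI.w => 1/12
  | GrpI.b => 1/24
def piG (i : GrpI) : ℝ := lapCDF 0 (cst i)
def Abar (b : Bool) : ℝ := (piG GrpI.w * qC GrpI.w b + piG GrpI.b * qC GrpI.b b) / 2
def Bbar (b : Bool) : ℝ :=
  ((1 - piG GrpI.w) * qC GrpI.w b + (1 - piG GrpI.b) * qC GrpI.b b) / 2
def pibar : ℝ := (piG GrpI.w + piG GrpI.b) / 2
def vv : ℝ := 2 * Abar true / Bbar true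
def dstar : X2 → ℝ := fun x => if x 0 = true ∧ x 1 = true then 1 else 0
def c0 : ℝ := Abar true * (2 / 3) / pibar - Bbar true * (1 / 3) / (1 - pibar)
def mshift : ℝ := c0 + Real.log (2 * (1 - pibar))

lemma cst_nonneg (i : GrpI) : 0 ≤ cst i := by cases i <;> norm_num [cst]

lemma piG_eq (i : GrpI) : piG i = 1 - Real.exp (-(cst i)) / 2 := by
  have h := lapCDF_of_ge (m := 0) (c := cst i) (cst_nonneg i)
  simpa [piG, sub_zero] using h

lemma piG_gt (i : GrpI) : 1 / 2 < piG i := by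
  rw [piG_eq]
  have h : Real.exp (-(cst i)) < 1 := by
    apply Real.exp_lt_one_iff.mpr
    cases i <;> norm_num [cst]
  linarith

lemma piG_le (i : GrpI) : piG i ≤ 13 / 24 := by
  rw [piG_eq]
  have h := Real.add_one_le_exp (-(cst i))
  have h2 : cst i ≤ 1 / 12 := by cases i <;> norm_num [cst]
  linarith

lemma piG_lt_one (i : GrpI) : piG i < 1 := lapCDF_lt_one 0 (cst i)

lemma piG_mono : piG GrpI.b ≤ piG GrpI.w := by
  rw [piG_eq, piG_eq]
  have h : Real.exp (-(cst GrpI.w)) ≤ Real.exp (-(cst GrpI.b)) := by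
    apply Real.exp_le_exp.mpr
    norm_num [cst]
  linarith

lemma qC_pos (i : GrpI) (b : Bool) : 0 < qC i b := by
  cases i <;> cases b <;> norm_num [qC]

lemma Abar_pos (b : Bool) : 0 < Abar b := by
  have h1 := piG_gt GrpI.w
  have h2 := piG_gt GrpI.b
  have h3 := qC_pos GrpI.w b
  have h4 := qC_pos GrpI.b b
  unfold Abar
  nlinarith

lemma Bbar_pos (b : Bool) : 0 < Bbar b := by
  have h1 := piG_lt_one GrpI.w
  have h2 := piG_lt_one GrpI.b
  have h3 := qC_pos GrpI.w b
  have h4 := qC_pos GrpI.b b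
  unfold Bbar
  nlinarith

lemma Bbar_le_Abar (b : Bool) : Bbar b ≤ Abar b := by
  have h1 := piG_gt GrpI.w
  have h2 := piG_gt GrpI.b
  have h3 := qC_pos GrpI.w b
  have h4 := qC_pos GrpI.b b
  unfold Abar Bbar
  nlinarith

lemma Abar_le_Bbar (b : Bool) : 11 * Abar b ≤ 13 * Bbar b := by
  have h1 := piG_le GrpI.w
  have h2 := piG_le GrpI.b
  have h3 := qC_pos GrpI.w b
  have h4 := qC_pos GrpI.b b
  unfold Abar Bbar
  nlinarith

lemma pibar_gt : 1 / 2 < pibar := by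
  have h1 := piG_gt GrpI.w; have h2 := piG_gt GrpI.b
  unfold pibar; linarith

lemma pibar_le : pibar ≤ 13 / 24 := by
  have h1 := piG_le GrpI.w; have h2 := piG_le GrpI.b
  unfold pibar; linarith

lemma pibar_pos : 0 < pibar := by linarith [pibar_gt]
lemma pibar_lt_one : pibar < 1 := by linarith [pibar_le]
lemma one_sub_pibar_pos : 0 < 1 - pibar := by linarith [pibar_lt_one]

lemma cross_ineq : Abar false * Bbar true ≤ Abar true * Bbar false := by
  have h := piG_mono
  unfold Abar Bbar qC
  norm_num
  nlinarith

lemma vv_pos : 0 < vv := by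
  unfold vv
  exact div_pos (by linarith [Abar_pos true]) (Bbar_pos true)

lemma Abar_sum : Abar true + Abar false = pibar := by
  unfold Abar pibar qC; norm_num; ring

lemma Bbar_sum : Bbar true + Bbar false = 1 - pibar := by
  unfold Bbar pibar qC; norm_num; ring

lemma projU_eq (a b : Bool) (xY : (j : (Finset.univ : Finset (Fin 2))) → Bool) :
    ((fun j : (Finset.univ : Finset (Fin 2)) => F2 a b j.1) = xY) ↔
      (xY ⟨0, Finset.mem_univ 0⟩ = a ∧ xY ⟨1, Finset.mem_univ 1⟩ = b) := by
  constructor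
  · intro h; rw [← h]; exact ⟨rfl, rfl⟩
  · rintro ⟨h0, h1⟩; funext j
    obtain ⟨j, hj⟩ := j
    fin_cases j
    · simpa using h0.symm
    · simpa using h1.symm

/-- The discriminatory game. -/
def GA : Game 2 XT where
  lamw := 1/2
  lamw_pos := by norm_num
  lamw_lt_one := by norm_num
  Ysub := {0}
  Ysub_nonempty := ⟨0, mem0⟩
  pY := fun xY y => match y with
    | Cls.q => pqf (xY ⟨0, mem0⟩)
    | Cls.u => puf (xY ⟨0, mem0⟩)
  pC := fun i x => qC i (x 1)
  pY_pos := by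
    intro xY y
    cases y <;> simp only [pqf, puf] <;> split <;> norm_num
  pC_pos := fun i x => qC_pos i (x 1)
  pY_sum := by
    intro y
    rw [← Equiv.sum_comp eY.symm]
    cases y <;> simp [eY, Fintype.sum_bool, pqf, puf] <;> norm_num
  pC_sum := by
    intro i xY
    rw [Finset.sum_filter, sum_X2]
    simp only [projY_eq, F2_one]
    rcases Bool.eq_false_or_eq_true (xY ⟨0, mem0⟩) with h | h <;>
      cases i <;> simp [h, qC] <;> norm_num
  g := lap 0
  g_pos := lap_pos 0
  g_int := integrable_lap 0
  g_norm := lapCDF_total 0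
  g_abs_int := integrable_abs_lap 0
  vq := 1
  vu := vv
  om := 1/2
  vq_pos := one_pos
  vu_pos := vv_pos
  om_pos := by norm_num

/-- The matching non-discriminatory game. -/
def GA' : Game 2 XT where
  lamw := 1/2
  lamw_pos := by norm_num
  lamw_lt_one := by norm_num
  Ysub := Finset.univ
  Ysub_nonempty := ⟨0, Finset.mem_univ 0⟩
  pY := fun xY y => match y with
    | Cls.q => Abar (xY ⟨1, Finset.mem_univ 1⟩) * pqf (xY ⟨0, Finset.mem_univ 0⟩) / pibar
    | Cls.u => Bbar (xY ⟨1, Finset.mem_univ 1⟩) * puf (xY ⟨0, Finset.mem_univ 0⟩) /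
        (1 - pibar)
  pC := fun _ _ => 1
  pY_pos := by
    intro xY y
    have h1 := Abar_pos (xY ⟨1, Finset.mem_univ 1⟩)
    have h2 := Bbar_pos (xY ⟨1, Finset.mem_univ 1⟩)
    have h3 := pibar_pos
    have h4 := one_sub_pibar_pos
    cases y <;> simp only [pqf, puf] <;> split <;> positivity
  pC_pos := fun _ _ => one_pos
  pY_sum := by
    intro y
    rw [← Equiv.sum_comp eU.symm, sum_X2]
    have h3 := pibar_pos.ne'
    have h4 := one_sub_pibar_pos.ne'
    have hA := Abar_sum
    have hB := Bbar_sum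
    cases y <;> simp only [eU, Equiv.coe_fn_symm_mk, F2_zero, F2_one, pqf, puf] <;>
      norm_num <;> field_simp <;> linarith
  pC_sum := by
    intro i xY
    rw [Finset.sum_filter, sum_X2]
    simp only [projU_eq]
    rcases Bool.eq_false_or_eq_true (xY ⟨0, Finset.mem_univ 0⟩) with h0 | h0 <;>
      rcases Bool.eq_false_or_eq_true (xY ⟨1, Finset.mem_univ 1⟩) with h1 | h1 <;>
      simp [h0, h1]
  g := lap mshift
  g_pos := lap_pos mshift
  g_int := integrable_lap mshift
  g_norm := lapCDF_total mshift
  g_abs_int := integrable_abs_lap mshift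
  vq := 1
  vu := vv
  om := 1
  vq_pos := one_pos
  vu_pos := vv_pos
  om_pos := one_pos

lemma pqf_pos (b : Bool) : 0 < pqf b := by cases b <;> norm_num [pqf]
lemma puf_pos (b : Bool) : 0 < puf b := by cases b <;> norm_num [puf]

def musig (x : X2) : ℝ := Abar (x 1) * pqf (x 0) + Bbar (x 1) * puf (x 0)

lemma musig_pos (x : X2) : 0 < musig x := by
  have := Abar_pos (x 1); have := Bbar_pos (x 1)
  have := pqf_pos (x 0); have := puf_pos (x 0)
  unfold musig; positivity

lemma GA_G (c : ℝ) : GA.G c = lapCDF 0 c := rfl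

lemma GA_piG (i : GrpI) : GA.G (cst i) = piG i := rfl

lemma GA_p_q (i : GrpI) (x : X2) : GA.p i x Cls.q = pqf (x 0) * qC i (x 1) := rfl
lemma GA_p_u (i : GrpI) (x : X2) : GA.p i x Cls.u = puf (x 0) * qC i (x 1) := rfl

lemma GA'_G (c : ℝ) : GA'.G c = lapCDF mshift c := rfl

lemma GA'_G_c0 : GA'.G c0 = pibar := by
  have h1 : 0 < 2 * (1 - pibar) := by linarith [one_sub_pibar_pos]
  have h2 : 2 * (1 - pibar) ≤ 1 := by linarith [pibar_gt]
  have hlog : Real.log (2 * (1 - pibar)) ≤ 0 := Real.log_nonpos (by linarith) h2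
  have hm : mshift ≤ c0 := by unfold mshift; linarith
  rw [GA'_G, lapCDF_of_ge hm]
  have : -(c0 - mshift) = Real.log (2 * (1 - pibar)) := by unfold mshift; ring
  rw [this, Real.exp_log h1]
  ring

lemma GA'_p_q (i : GrpI) (x : X2) :
    GA'.p i x Cls.q = Abar (x 1) * pqf (x 0) / pibar * 1 := rfl
lemma GA'_p_u (i : GrpI) (x : X2) :
    GA'.p i x Cls.u = Bbar (x 1) * puf (x 0) / (1 - pibar) * 1 := rfl

lemma GA_mucb (x : X2) : GA.mucbRE cst x = musig x := by
  unfold Game.mucbRE Game.muRE Game.lam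
  rw [GA_p_q, GA_p_u, GA_p_q, GA_p_u, GA_piG, GA_piG]
  show 1/2 * _ + (1 - 1/2) * _ = _
  unfold musig Abar Bbar
  ring

lemma GA'_mucb (x : X2) : GA'.mucbRE (fun _ => c0) x = musig x := by
  unfold Game.mucbRE Game.muRE Game.lam
  rw [GA'_p_q, GA'_p_u, GA'_p_q, GA'_p_u, GA'_G_c0]
  show 1/2 * _ + (1 - 1/2) * _ = _
  have h1 := pibar_pos.ne'
  have h2 := one_sub_pibar_pos.ne'
  field_simp
  unfold musig
  ring

lemma GA_muf (i : GrpI) (x : X2) :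
    GA.muRE cst i x * GA.fRE cst i x = GA.lam i * (piG i * (pqf (x 0) * qC i (x 1))) := by
  unfold Game.muRE Game.fRE
  rw [GA_p_q, GA_p_u, GA_piG]
  have hD : 0 < piG i * (pqf (x 0) * qC i (x 1)) + (1 - piG i) * (puf (x 0) * qC i (x 1)) := by
    have h1 := piG_gt i; have h2 := piG_lt_one i
    have h3 := pqf_pos (x 0); have h4 := puf_pos (x 0); have h5 := qC_pos i (x 1)
    have ha := mul_pos (show (0:ℝ) < piG i by linarith) (mul_pos h3 h5)
    have hb := mul_pos (show (0:ℝ) < 1 - piG i by linarith) (mul_pos h4 h5)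
    linarith
  have hD' := hD.ne'
  rw [mul_assoc, mul_div_assoc', mul_div_cancel_left₀ _ hD']

lemma GA_fcb (x : X2) : GA.fcbRE cst x = Abar (x 1) * pqf (x 0) / musig x := by
  unfold Game.fcbRE
  rw [GA_muf, GA_muf, GA_mucb]
  have hl : GA.lam GrpI.w = 1/2 := rfl
  have hlb : GA.lam GrpI.b = 1 - 1/2 := rfl
  rw [hl, hlb]
  congr 1
  unfold Abar
  ring

lemma GA'_muf (i : GrpI) (x : X2) :
    GA'.muRE (fun _ => c0) i x * GA'.fRE (fun _ => c0) i x
      = GA'.lam i * (Abar (x 1) * pqf (x 0)) := by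
  unfold Game.muRE Game.fRE
  rw [GA'_p_q, GA'_p_u]
  show GA'.lam i * (GA'.G c0 * _ + (1 - GA'.G c0) * _) * (GA'.G c0 * _ / (GA'.G c0 * _ + (1 - GA'.G c0) * _)) = _
  rw [GA'_G_c0]
  have h1 := pibar_pos
  have h2 := one_sub_pibar_pos
  have hA := Abar_pos (x 1); have hB := Bbar_pos (x 1)
  have hq := pqf_pos (x 0); have hu := puf_pos (x 0)
  have hD : 0 < pibar * (Abar (x 1) * pqf (x 0) / pibar * 1)
      + (1 - pibar) * (Bbar (x 1) * puf (x 0) / (1 - pibar) * 1) := by positivity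
  field_simp

lemma GA'_fcb (x : X2) :
    GA'.fcbRE (fun _ => c0) x = Abar (x 1) * pqf (x 0) / musig x := by
  unfold Game.fcbRE
  rw [GA'_muf, GA'_muf, GA'_mucb]
  have hl : GA'.lam GrpI.w = 1/2 := rfl
  have hlb : GA'.lam GrpI.b = 1 - 1/2 := rfl
  rw [hl, hlb]
  congr 1
  ring

lemma vvBt : vv * Bbar true = 2 * Abar true := by
  have hBt := (Bbar_pos true).ne'
  unfold vv
  field_simp

lemma vvBf : 2 * Abar false ≤ vv * Bbar false := by
  have hBt := Bbar_pos true
  unfold vv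
  rw [div_mul_eq_mul_div, le_div_iff₀ hBt]
  nlinarith [cross_ineq]

lemma dstar_tt : dstar (F2 true true) = 1 := by simp [dstar]
lemma dstar_tf : dstar (F2 true false) = 0 := by simp [dstar]
lemma dstar_ft : dstar (F2 false true) = 0 := by simp [dstar]
lemma dstar_ff : dstar (F2 false false) = 0 := by simp [dstar]

def coefs (x : X2) : ℝ := Abar (x 1) * pqf (x 0) - vv * (Bbar (x 1) * puf (x 0))

lemma coef_tt : coefs (F2 true true) = 0 := by
  unfold coefs
  simp only [F2_zero, F2_one]
  norm_num [pqf, puf]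
  nlinarith [vvBt]

lemma coef_tf : coefs (F2 true false) ≤ 0 := by
  unfold coefs
  simp only [F2_zero, F2_one]
  norm_num [pqf, puf]
  nlinarith [vvBf]

lemma coef_ft : coefs (F2 false true) ≤ 0 := by
  unfold coefs
  simp only [F2_zero, F2_one]
  norm_num [pqf, puf]
  nlinarith [vvBt, Abar_pos true]

lemma coef_ff : coefs (F2 false false) ≤ 0 := by
  unfold coefs
  simp only [F2_zero, F2_one]
  norm_num [pqf, puf]
  nlinarith [vvBf, Abar_pos false]

lemma sum_coef_le (d : X2 → ℝ) (hd : ∀ x, 0 ≤ d x) : ∑ x, d x * coefs x ≤ 0 := by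
  rw [sum_X2]
  have h1 : d (F2 true true) * coefs (F2 true true) = 0 := by rw [coef_tt, mul_zero]
  have h2 : d (F2 true false) * coefs (F2 true false) ≤ 0 :=
    mul_nonpos_iff.mpr (Or.inl ⟨hd _, coef_tf⟩)
  have h3 : d (F2 false true) * coefs (F2 false true) ≤ 0 :=
    mul_nonpos_iff.mpr (Or.inl ⟨hd _, coef_ft⟩)
  have h4 : d (F2 false false) * coefs (F2 false false) ≤ 0 :=
    mul_nonpos_iff.mpr (Or.inl ⟨hd _, coef_ff⟩)
  linarith

lemma sum_coef_dstar : ∑ x, dstar x * coefs x = 0 := by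
  rw [sum_X2, dstar_tt, dstar_tf, dstar_ft, dstar_ff, coef_tt]
  ring

lemma GA_UFcb_eq (d : X2 → ℝ) :
    GA.UFcb d (GA.mucbRE cst) (GA.fcbRE cst) = ∑ x, d x * coefs x := by
  unfold Game.UFcb
  apply Finset.sum_congr rfl
  intro x _
  rw [GA_mucb, GA_fcb]
  have h := (musig_pos x).ne'
  have hq : GA.vq = 1 := rfl
  have hu : GA.vu = vv := rfl
  rw [hq, hu]
  unfold coefs
  field_simp
  unfold musig
  ring

lemma GA'_UFcb_eq (d : X2 → ℝ) :
    GA'.UFcb d (GA'.mucbRE fun _ => c0) (GA'.fcbRE fun _ => c0) = ∑ x, d x * coefs x := by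
  unfold Game.UFcb
  apply Finset.sum_congr rfl
  intro x _
  rw [GA'_mucb, GA'_fcb]
  have h := (musig_pos x).ne'
  have hq : GA'.vq = 1 := rfl
  have hu : GA'.vu = vv := rfl
  rw [hq, hu]
  unfold coefs
  field_simp
  unfold musig
  ring

lemma dstar_policy : IsCbPolicy dstar := by
  intro x
  unfold dstar
  split <;> norm_num

lemma GA_firm : ∀ dcb', IsCbPolicy dcb' →
    GA.UFcb dcb' (GA.mucbRE cst) (GA.fcbRE cst)
      ≤ GA.UFcb dstar (GA.mucbRE cst) (GA.fcbRE cst) := by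
  intro d' hd'
  rw [GA_UFcb_eq, GA_UFcb_eq, sum_coef_dstar]
  exact sum_coef_le d' fun x => (hd' x).1

lemma GA'_firm : ∀ dcb', IsCbPolicy dcb' →
    GA'.UFcb dcb' (GA'.mucbRE fun _ => c0) (GA'.fcbRE fun _ => c0)
      ≤ GA'.UFcb dstar (GA'.mucbRE fun _ => c0) (GA'.fcbRE fun _ => c0) := by
  intro d' hd'
  rw [GA'_UFcb_eq, GA'_UFcb_eq, sum_coef_dstar]
  exact sum_coef_le d' fun x => (hd' x).1

lemma GA_oneNot : GA.OneNotLV := by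
  rintro ⟨x, hx⟩
  have he : GA.lhd x = pqf (x 0) / puf (x 0) := rfl
  rw [he] at hx
  rcases Bool.eq_false_or_eq_true (x 0) with h | h <;> rw [h] at hx <;>
    norm_num [pqf, puf] at hx

lemma GA'_oneNot : GA'.OneNotLV := by
  rintro ⟨x, hx⟩
  have he : GA'.lhd x = (Abar (x 1) * pqf (x 0) / pibar) /
      (Bbar (x 1) * puf (x 0) / (1 - pibar)) := rfl
  rw [he] at hx
  have h1 := pibar_pos
  have h2 := one_sub_pibar_pos
  have hA := Abar_pos (x 1)
  have hB := Bbar_pos (x 1)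
  have hq := pqf_pos (x 0)
  have hu := puf_pos (x 0)
  have hBA := Bbar_le_Abar (x 1)
  have hAB := Abar_le_Bbar (x 1)
  have hpg := pibar_gt
  have hpl := pibar_le
  have hx' : Abar (x 1) * pqf (x 0) * (1 - pibar) = Bbar (x 1) * puf (x 0) * pibar := by
    field_simp at hx
    linarith
  rcases Bool.eq_false_or_eq_true (x 0) with h | h <;> rw [h] at hx' <;>
    norm_num [pqf, puf] at hx'
  · nlinarith [mul_nonneg (sub_nonneg.mpr hAB) h2.le,
      mul_nonneg hB.le (show (0:ℝ) ≤ pibar - 1/2 by linarith),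
      mul_nonneg hA.le (show (0:ℝ) ≤ pibar - 1/2 by linarith),
      mul_nonneg hB.le (show (0:ℝ) ≤ 13/24 - pibar by linarith)]
  · nlinarith [mul_nonneg (sub_nonneg.mpr hBA) h2.le,
      mul_nonneg hB.le (show (0:ℝ) ≤ pibar - 1/2 by linarith),
      mul_nonneg hB.le (show (0:ℝ) ≤ 13/24 - pibar by linarith),
      mul_nonneg hA.le (show (0:ℝ) ≤ 13/24 - pibar by linarith)]

lemma GA_Uapp (i : GrpI) (c : ℝ) :
    GA.Uapp i c dstar = cst i * lapCDF 0 c + qC i true / 6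
      - ∫ t in Iic c, t * lap 0 t := by
  unfold Game.Uapp
  rw [show GA.g = lap 0 from rfl]
  rw [sum_X2]
  simp only [GA_p_q, GA_p_u, dstar_tt, dstar_tf, dstar_ft, dstar_ff, F2_zero, F2_one,
    GA_G]
  have hom : GA.om = 1/2 := rfl
  rw [hom]
  cases i <;> norm_num [cst, qC, pqf, puf] <;> ring

lemma GA_br : GA.BestRespondsCb cst dstar := by
  intro i c'
  rw [GA_Uapp, GA_Uapp]
  have h := lap_br 0 (cst i) c'
  linarith

lemma GA'_Uapp (i : GrpI) (c : ℝ) :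
    GA'.Uapp i c dstar = c0 * lapCDF mshift c + Bbar true * (1/3) / (1 - pibar)
      - ∫ t in Iic c, t * lap mshift t := by
  unfold Game.Uapp
  rw [show GA'.g = lap mshift from rfl]
  rw [sum_X2]
  simp only [GA'_p_q, GA'_p_u, dstar_tt, dstar_tf, dstar_ft, dstar_ff, F2_zero, F2_one,
    GA'_G]
  have hom : GA'.om = 1 := rfl
  rw [hom]
  norm_num [pqf, puf]
  unfold c0
  ring

lemma GA'_br : GA'.BestRespondsCb (fun _ => c0) dstar := by
  intro i c'
  rw [GA'_Uapp, GA'_Uapp]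
  have h := lap_br mshift c0 c'
  linarith

lemma GA_eqm : GA.IsCbEquilibrium cst dstar := ⟨dstar_policy, GA_br, GA_firm⟩

lemma GA'_eqm : GA'.IsCbEquilibrium (fun _ => c0) dstar := ⟨dstar_policy, GA'_br, GA'_firm⟩

end NoIdeal

open NoIdeal in
/-- **Theorem 2.** When data is color-blind, there does not exist an ideal
control: no color-blind control `k_cb` both (1) brings gains to the
discriminated group in every discriminatory equilibrium of every game, and
(2) has its controlled equilibria coincide with the non-discriminatory
equilibria in every game. -/
theorem no_ideal_control_with_color_blind_data :
    ¬∃ k : CbControl,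
      (∀ (N : ℕ) (Xs : Fin N → Type) [∀ j, Fintype (Xs j)] [∀ j, Nonempty (Xs j)]
        (Γ : Game N Xs), Γ.OneNotLV →
        ∀ (c : GrpI → ℝ) (dcb : ((j : Fin N) → Xs j) → ℝ),
          Γ.IsCbEquilibrium c dcb → c GrpI.w ≠ c GrpI.b →
          ∀ dh ∈ k.sets N Xs (Γ.mucbRE c) (Γ.fcbRE c),
            (∀ d' ∈ k.sets N Xs (Γ.mucbRE c) (Γ.fcbRE c),
              Γ.UFcb d' (Γ.mucbRE c) (Γ.fcbRE c) ≤
                Γ.UFcb dh (Γ.mucbRE c) (Γ.fcbRE c)) →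
            Set.Icc
                (min (AR GrpI.w (fun _ => dh) (Γ.muRE c))
                  (AR GrpI.b (fun _ => dh) (Γ.muRE c)))
                (max (AR GrpI.w (fun _ => dh) (Γ.muRE c))
                  (AR GrpI.b (fun _ => dh) (Γ.muRE c))) ⊂
              Set.Icc
                (min (AR GrpI.w (fun _ => dcb) (Γ.muRE c))
                  (AR GrpI.b (fun _ => dcb) (Γ.muRE c)))
                (max (AR GrpI.w (fun _ => dcb) (Γ.muRE c))
                  (AR GrpI.b (fun _ => dcb) (Γ.muRE c)))) ∧
      (∀ (N : ℕ) (Xs : Fin N → Type) [∀ j, Fintype (Xs j)] [∀ j, Nonempty (Xs j)]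
        (Γ : Game N Xs), Γ.OneNotLV →
        ∀ (c : GrpI → ℝ) (dcb : ((j : Fin N) → Xs j) → ℝ),
          Γ.IsCbControlledEq (k.sets N Xs (Γ.mucbRE c) (Γ.fcbRE c)) c dcb ↔
            Γ.IsCbEquilibrium c dcb ∧ c GrpI.w = c GrpI.b) := by
  rintro ⟨k, h1, h2⟩
  have hmu : GA'.mucbRE (fun _ => c0) = GA.mucbRE cst :=
    funext fun x => (GA'_mucb x).trans (GA_mucb x).symm
  have hfe : GA'.fcbRE (fun _ => c0) = GA.fcbRE cst :=
    funext fun x => (GA'_fcb x).trans (GA_fcb x).symm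
  have h2' := (h2 2 XT GA' GA'_oneNot (fun _ => c0) dstar).mpr ⟨GA'_eqm, rfl⟩
  obtain ⟨hmem, -, hmax⟩ := h2'
  rw [hmu, hfe] at hmem hmax
  have hmax' : ∀ d' ∈ k.sets 2 XT (GA.mucbRE cst) (GA.fcbRE cst),
      GA.UFcb d' (GA.mucbRE cst) (GA.fcbRE cst)
        ≤ GA.UFcb dstar (GA.mucbRE cst) (GA.fcbRE cst) := hmax
  have hne : cst GrpI.w ≠ cst GrpI.b := by norm_num [cst]
  have hfin := h1 2 XT GA GA_oneNot cst dstar GA_eqm hne dstar hmem hmax'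
  exact (ssubset_irrefl _) hfin
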